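/- Let f : {-1,1}^n → {-1,1} and ε ∈ (0,1). Then ‖f̂‖₁^ε = (1-ε)‖f̂‖₁ if and only if f ∈ f**, where f* is the set of g : {-1,1}^n → [-1,1] with g(x) = sign(f̂(S_x)) whenever f̂(S_x) ≠ 0 (with S_x = {i : x_i = -1}), and f** is the set of h : {-1,1}^n → [-1,1] such that for some g ∈ f*, h(x) = sign(ĝ(S_x)) whenever ĝ(S_x) ≠ 0. -/
import Mathlib


open Finset

/-- The map identifying a bit with `±1`: `false ↦ 1`, `true ↦ -1`. -/
noncomputable def chi (b : Bool) : ℝ := if b then -1 else 1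

/-- Fourier coefficient `F^(S) = E_z[F(z) ∏_{i∈S} z_i]`. -/
noncomputable def fCoeff {n : ℕ} (F : (Fin n → Bool) → ℝ) (S : Finset (Fin n)) : ℝ :=
  (1 / 2 ^ n) * ∑ z : Fin n → Bool, F z * ∏ i ∈ S, chi (z i)

/-- Fourier ℓ₁ norm `‖F^‖₁ = ∑_S |F^(S)|`. -/
noncomputable def fourierL1 {n : ℕ} (F : (Fin n → Bool) → ℝ) : ℝ :=
  ∑ S : Finset (Fin n), |fCoeff F S|

/-- `ε`-approximate Fourier ℓ₁ norm. -/
noncomputable def apxFourierL1 {n : ℕ} (f : (Fin n → Bool) → ℝ) (ε : ℝ) : ℝ :=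
  sInf (fourierL1 '' {h : (Fin n → Bool) → ℝ | ∀ x, |h x - f x| ≤ ε})

/-- `S_x = {i : x_i = -1}`. -/
def Sx {n : ℕ} (x : Fin n → Bool) : Finset (Fin n) :=
  Finset.univ.filter (fun i => x i = true)

/-- `g ∈ f*`: `g` maps into `[-1,1]` and `g(x) = sign(f^(S_x))` whenever
`f^(S_x) ≠ 0`. -/
def memStar {n : ℕ} (f g : (Fin n → Bool) → ℝ) : Prop :=
  (∀ x, g x ∈ Set.Icc (-1:ℝ) 1) ∧
  ∀ x, fCoeff f (Sx x) ≠ 0 → g x = Real.sign (fCoeff f (Sx x))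

noncomputable def chiS {n : ℕ} (S : Finset (Fin n)) (z : Fin n → Bool) : ℝ :=
  ∏ i ∈ S, chi (z i)

lemma chi_mul_self (b : Bool) : chi b * chi b = 1 := by cases b <;> simp [chi]

lemma chi_not (b : Bool) : chi (!b) = - chi b := by cases b <;> simp [chi]

lemma fCoeff_eq {n : ℕ} (F : (Fin n → Bool) → ℝ) (S : Finset (Fin n)) :
    fCoeff F S = (1 / 2 ^ n) * ∑ z : Fin n → Bool, F z * chiS S z := rfl

lemma chiS_eq_prod_univ {n : ℕ} (S : Finset (Fin n)) (z : Fin n → Bool) :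
    chiS S z = ∏ i : Fin n, (if i ∈ S then chi (z i) else 1) := by
  rw [chiS, Finset.prod_ite_mem, Finset.univ_inter]

-- the point-set equivalence
def ptEquiv (n : ℕ) : (Fin n → Bool) ≃ Finset (Fin n) where
  toFun := Sx
  invFun S := fun i => decide (i ∈ S)
  left_inv x := by funext i; simp [Sx]
  right_inv S := by ext i; simp [Sx]

lemma Sx_injective {n : ℕ} : Function.Injective (Sx (n := n)) :=
  (ptEquiv n).injective

lemma sum_over_sets {n : ℕ} (F : Finset (Fin n) → ℝ) :
    ∑ S : Finset (Fin n), F S = ∑ x : Fin n → Bool, F (Sx x) :=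
  (Equiv.sum_comp (ptEquiv n) F).symm

lemma chiS_Sx_symm {n : ℕ} (x z : Fin n → Bool) :
    chiS (Sx x) z = chiS (Sx z) x := by
  rw [chiS_eq_prod_univ, chiS_eq_prod_univ]
  refine Finset.prod_congr rfl fun i _ => ?_
  simp only [Sx, Finset.mem_filter, Finset.mem_univ, true_and]
  cases hx : x i <;> cases hz : z i <;> simp [chi]

lemma chiS_update {n : ℕ} (U : Finset (Fin n)) (z : Fin n → Bool) (i₀ : Fin n) (hi₀ : i₀ ∈ U)
    (b : Bool) : chiS U (Function.update z i₀ b) = chi b * ∏ i ∈ U \ {i₀}, chi (z i) := by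
  rw [chiS, Finset.prod_eq_mul_prod_sdiff_singleton_of_mem hi₀ (fun i => chi (Function.update z i₀ b i))]
  congr 1
  · simp
  · refine Finset.prod_congr rfl fun i hi => ?_
    rw [Function.update_of_ne ((Finset.mem_sdiff.mp hi).2 ∘ Finset.mem_singleton.mpr) _ _]

lemma sum_chiS {n : ℕ} (U : Finset (Fin n)) :
    ∑ z : Fin n → Bool, chiS U z = if U = ∅ then (2:ℝ)^n else 0 := by
  split_ifs with h
  · subst h
    simp [chiS, Finset.card_univ]
  · obtain ⟨i₀, hi₀⟩ := Finset.nonempty_iff_ne_empty.mpr h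
    refine Finset.sum_ninvolution (fun z => Function.update z i₀ (! z i₀)) ?_ ?_ (fun _ => Finset.mem_univ _) ?_
    · intro z
      have h1 := chiS_update U z i₀ hi₀ (z i₀)
      have h2 := chiS_update U z i₀ hi₀ (! z i₀)
      rw [Function.update_eq_self] at h1
      rw [h1, h2, chi_not]
      ring
    · intro z hz
      intro hc
      have := congrFun hc i₀
      simp at this
    · intro z
      funext i
      by_cases hi : i = i₀
      · subst hi; simp
      · simp [Function.update_of_ne hi]

lemma chiS_mul_chiS {n : ℕ} (S T : Finset (Fin n)) (z : Fin n → Bool) :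
    chiS S z * chiS T z = chiS (symmDiff S T) z := by
  rw [chiS_eq_prod_univ, chiS_eq_prod_univ, chiS_eq_prod_univ, ← Finset.prod_mul_distrib]
  refine Finset.prod_congr rfl fun i _ => ?_
  by_cases hS : i ∈ S <;> by_cases hT : i ∈ T <;>
    simp [Finset.mem_symmDiff, hS, hT, chi_mul_self]

lemma sum_chiS_mul_chiS {n : ℕ} (S T : Finset (Fin n)) :
    ∑ z : Fin n → Bool, chiS S z * chiS T z = if S = T then (2:ℝ)^n else 0 := by
  simp_rw [chiS_mul_chiS, sum_chiS]
  simp only [← Finset.bot_eq_empty, symmDiff_eq_bot]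

lemma fCoeff_smul {n : ℕ} (c : ℝ) (F : (Fin n → Bool) → ℝ) (S : Finset (Fin n)) :
    fCoeff (fun z => c * F z) S = c * fCoeff F S := by
  simp only [fCoeff_eq, Finset.mul_sum]
  exact Finset.sum_congr rfl fun z _ => by ring

lemma fCoeff_add {n : ℕ} (F G : (Fin n → Bool) → ℝ) (S : Finset (Fin n)) :
    fCoeff (fun z => F z + G z) S = fCoeff F S + fCoeff G S := by
  simp only [fCoeff_eq, Finset.mul_sum, ← Finset.sum_add_distrib]
  exact Finset.sum_congr rfl fun z _ => by ring

lemma fCoeff_chiS {n : ℕ} (T S : Finset (Fin n)) :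
    fCoeff (chiS T) S = if S = T then 1 else 0 := by
  rw [fCoeff_eq]
  have h2 : ∑ z : Fin n → Bool, chiS T z * chiS S z = if T = S then (2:ℝ)^n else 0 :=
    sum_chiS_mul_chiS T S
  rw [h2]
  rcases eq_or_ne S T with h | h
  · subst h; simp [one_div, inv_mul_cancel₀ (by positivity : ((2:ℝ)^n) ≠ 0)]
  · simp [h, Ne.symm h]

lemma fourierL1_mul_chiS {n : ℕ} (c : ℝ) (T : Finset (Fin n)) :
    fourierL1 (fun z => c * chiS T z) = |c| := by
  have h : ∀ S, fCoeff (fun z => c * chiS T z) S = c * (if S = T then 1 else 0) := by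
    intro S
    rw [fCoeff_smul, fCoeff_chiS]
  unfold fourierL1
  simp_rw [h]
  rw [Finset.sum_eq_single T]
  · simp
  · intro S _ hS; simp [hS]
  · intro h; exact absurd (Finset.mem_univ T) h

lemma swap_sum {n : ℕ} (g h : (Fin n → Bool) → ℝ) :
    ∑ x : Fin n → Bool, g x * fCoeff h (Sx x)
      = ∑ z : Fin n → Bool, h z * fCoeff g (Sx z) := by
  simp only [fCoeff_eq, Finset.mul_sum]
  rw [Finset.sum_comm]
  refine Finset.sum_congr rfl fun z _ => ?_
  refine Finset.sum_congr rfl fun x _ => ?_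
  rw [chiS_Sx_symm]
  ring

lemma fourierL1_eq_sum_points {n : ℕ} (F : (Fin n → Bool) → ℝ) :
    fourierL1 F = ∑ x : Fin n → Bool, |fCoeff F (Sx x)| :=
  sum_over_sets (fun S => |fCoeff F S|)

lemma rsign_mul_self (a : ℝ) : Real.sign a * a = |a| := by
  rcases lt_trichotomy a 0 with h | h | h
  · rw [Real.sign_of_neg h, abs_of_neg h]; ring
  · simp [h]
  · rw [Real.sign_of_pos h, abs_of_pos h]; ring

lemma eq_sign_of_mul_eq_abs {r a : ℝ} (ha : a ≠ 0) (h : r * a = |a|) : r = Real.sign a := by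
  have hr : r = |a| / a := (eq_div_iff ha).mpr h
  rw [hr]
  rcases lt_trichotomy a 0 with h' | h' | h'
  · rw [abs_of_neg h', Real.sign_of_neg h', neg_div, div_self ha]
  · exact absurd h' ha
  · rw [abs_of_pos h', Real.sign_of_pos h', div_self ha]

lemma abs_sign_le_one (a : ℝ) : |Real.sign a| ≤ 1 := by
  rcases lt_trichotomy a 0 with h | h | h <;>
    simp [Real.sign_of_neg, Real.sign_of_pos, h, Real.sign_zero]

lemma star_term {n : ℕ} {f g : (Fin n → Bool) → ℝ} (hst : memStar f g) (x : Fin n → Bool) :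
    g x * fCoeff f (Sx x) = |fCoeff f (Sx x)| := by
  by_cases h : fCoeff f (Sx x) = 0
  · simp [h]
  · rw [hst.2 x h, rsign_mul_self]

lemma pairing_le_fourierL1 {n : ℕ} {g : (Fin n → Bool) → ℝ} (hg : ∀ x, |g x| ≤ 1)
    (h : (Fin n → Bool) → ℝ) :
    ∑ x : Fin n → Bool, g x * fCoeff h (Sx x) ≤ fourierL1 h := by
  rw [fourierL1_eq_sum_points]
  refine Finset.sum_le_sum fun x _ => ?_
  calc g x * fCoeff h (Sx x) ≤ |g x * fCoeff h (Sx x)| := le_abs_self _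
    _ = |g x| * |fCoeff h (Sx x)| := abs_mul _ _
    _ ≤ 1 * |fCoeff h (Sx x)| := by
        exact mul_le_mul_of_nonneg_right (hg x) (abs_nonneg _)
    _ = |fCoeff h (Sx x)| := one_mul _

lemma lb_of_cert {n : ℕ} {f g h : (Fin n → Bool) → ℝ} {ε : ℝ}
    (h1 : memStar f g) (h2 : memStar g f)
    (hfeas : ∀ x, |h x - f x| ≤ ε) :
    (1 - ε) * fourierL1 f ≤ fourierL1 h := by
  set B := ∑ z : Fin n → Bool, |fCoeff g (Sx z)| with hB
  have hBF : ∑ z : Fin n → Bool, f z * fCoeff g (Sx z) = B :=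
    Finset.sum_congr rfl fun z _ => star_term h2 z
  have hswap : ∑ x : Fin n → Bool, g x * fCoeff f (Sx x)
      = ∑ z : Fin n → Bool, f z * fCoeff g (Sx z) := swap_sum g f
  have hgF : ∑ x : Fin n → Bool, g x * fCoeff f (Sx x) = fourierL1 f := by
    rw [fourierL1_eq_sum_points]
    exact Finset.sum_congr rfl fun x _ => star_term h1 x
  have hBeq : B = fourierL1 f := by rw [← hBF, ← hswap, hgF]
  have hg1 : ∀ x, |g x| ≤ 1 := fun x => abs_le.mpr ⟨(h1.1 x).1, (h1.1 x).2⟩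
  have step1 : ∑ x : Fin n → Bool, g x * fCoeff h (Sx x) ≤ fourierL1 h :=
    pairing_le_fourierL1 hg1 h
  have step2 : ∑ x : Fin n → Bool, g x * fCoeff h (Sx x)
      = ∑ z : Fin n → Bool, h z * fCoeff g (Sx z) := swap_sum g h
  have step3 : ∑ z : Fin n → Bool, h z * fCoeff g (Sx z)
      = ∑ z : Fin n → Bool, f z * fCoeff g (Sx z)
        + ∑ z : Fin n → Bool, (h z - f z) * fCoeff g (Sx z) := by
    rw [← Finset.sum_add_distrib]
    exact Finset.sum_congr rfl fun z _ => by ring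
  have step4 : ∑ z : Fin n → Bool, (h z - f z) * fCoeff g (Sx z) ≥ -(ε * B) := by
    rw [hB, Finset.mul_sum, ← Finset.sum_neg_distrib]
    refine Finset.sum_le_sum fun z _ => ?_
    have : |(h z - f z) * fCoeff g (Sx z)| ≤ ε * |fCoeff g (Sx z)| := by
      rw [abs_mul]
      exact mul_le_mul_of_nonneg_right (hfeas z) (abs_nonneg _)
    nlinarith [neg_abs_le ((h z - f z) * fCoeff g (Sx z))]
  calc (1 - ε) * fourierL1 f = B - ε * B := by rw [hBeq]; ring
    _ ≤ ∑ z : Fin n → Bool, h z * fCoeff g (Sx z) := by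
        rw [step3, hBF]; linarith [step4]
    _ = _ := step2.symm
    _ ≤ fourierL1 h := step1

lemma continuous_fCoeff {n : ℕ} (S : Finset (Fin n)) :
    Continuous fun F : (Fin n → Bool) → ℝ => fCoeff F S := by
  simp only [fCoeff_eq]
  exact continuous_const.mul (continuous_finset_sum _ fun z _ =>
    (continuous_apply z).mul continuous_const)

lemma continuous_fourierL1 {n : ℕ} : Continuous (fourierL1 (n := n)) := by
  unfold fourierL1
  exact continuous_finset_sum _ fun S _ => (continuous_fCoeff S).abs

lemma fCoeff_zero {n : ℕ} (S : Finset (Fin n)) : fCoeff (0 : (Fin n → Bool) → ℝ) S = 0 := by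
  simp [fCoeff_eq]

lemma fourierL1_zero {n : ℕ} : fourierL1 (0 : (Fin n → Bool) → ℝ) = 0 := by
  simp [fourierL1, fCoeff_zero]

lemma fourierL1_convex_comb {n : ℕ} (h1 h2 : (Fin n → Bool) → ℝ) {a b : ℝ}
    (ha : 0 ≤ a) (hb : 0 ≤ b) :
    fourierL1 (a • h1 + b • h2) ≤ a * fourierL1 h1 + b * fourierL1 h2 := by
  have key : ∀ S, fCoeff (a • h1 + b • h2) S = a * fCoeff h1 S + b * fCoeff h2 S := by
    intro S
    have e : (a • h1 + b • h2) = fun z => a * h1 z + b * h2 z := by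
      funext z; simp [Pi.add_apply, Pi.smul_apply, smul_eq_mul]
    rw [e, fCoeff_add (fun z => a * h1 z) (fun z => b * h2 z) S,
      fCoeff_smul, fCoeff_smul]
  unfold fourierL1
  rw [Finset.mul_sum, Finset.mul_sum, ← Finset.sum_add_distrib]
  refine Finset.sum_le_sum fun S _ => ?_
  rw [key S]
  calc |a * fCoeff h1 S + b * fCoeff h2 S| ≤ |a * fCoeff h1 S| + |b * fCoeff h2 S| := abs_add_le _ _
    _ = a * |fCoeff h1 S| + b * |fCoeff h2 S| := by
        rw [abs_mul, abs_mul, abs_of_nonneg ha, abs_of_nonneg hb]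

lemma psi_eval {n : ℕ} (ψ : ((Fin n → Bool) → ℝ) →L[ℝ] ℝ) (h : (Fin n → Bool) → ℝ) :
    ψ h = ∑ z : Fin n → Bool, h z * ψ (Pi.single z 1) := by
  conv_lhs => rw [← Finset.univ_sum_single h]
  rw [map_sum]
  refine Finset.sum_congr rfl fun z _ => ?_
  have e : Pi.single z (h z) = (h z) • (Pi.single z 1 : (Fin n → Bool) → ℝ) := by
    funext w
    by_cases hw : w = z <;> simp [Pi.single_apply, hw]
  rw [e, map_smul, smul_eq_mul]

lemma sep_lemma {n : ℕ} (f : (Fin n → Bool) → ℝ) (ε D' : ℝ) (hε : 0 < ε)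
    (hD0 : 0 < D') (hD : D' < (1 - ε) * fourierL1 f)
    (hlb : ∀ h : (Fin n → Bool) → ℝ, (∀ x, |h x - f x| ≤ ε) →
      (1 - ε) * fourierL1 f ≤ fourierL1 h) :
    ∃ g : (Fin n → Bool) → ℝ, (∀ x, |g x| ≤ 1) ∧
      D' < (∑ z : Fin n → Bool, f z * fCoeff g (Sx z))
            - ε * ∑ z : Fin n → Bool, |fCoeff g (Sx z)| := by
  classical
  set K : Set ((Fin n → Bool) → ℝ) := {h | fourierL1 h ≤ D'} with hKdef
  set Fs : Set ((Fin n → Bool) → ℝ) := {h | ∀ x, |h x - f x| ≤ ε} with hFdef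
  have hKconv : Convex ℝ K := by
    intro h1 hh1 h2 hh2 a b ha hb hab
    have := fourierL1_convex_comb h1 h2 ha hb
    have hle : a * fourierL1 h1 + b * fourierL1 h2 ≤ D' := by
      calc a * fourierL1 h1 + b * fourierL1 h2 ≤ a * D' + b * D' := by
            refine add_le_add ?_ ?_ <;>
              exact mul_le_mul_of_nonneg_left (by assumption) (by assumption)
        _ = D' := by rw [← add_mul, hab, one_mul]
    exact le_trans this hle
  have hKclosed : IsClosed K := IsClosed.preimage continuous_fourierL1 isClosed_Iic
  have hFconv : Convex ℝ Fs := by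
    intro h1 hh1 h2 hh2 a b ha hb hab
    intro x
    have e : (a • h1 + b • h2) x - f x = a * (h1 x - f x) + b * (h2 x - f x) := by
      simp only [Pi.add_apply, Pi.smul_apply, smul_eq_mul]
      have : a * f x + b * f x = f x := by rw [← add_mul, hab, one_mul]
      linarith
    rw [e]
    calc |a * (h1 x - f x) + b * (h2 x - f x)|
        ≤ |a * (h1 x - f x)| + |b * (h2 x - f x)| := abs_add_le _ _
      _ = a * |h1 x - f x| + b * |h2 x - f x| := by
          rw [abs_mul, abs_mul, abs_of_nonneg ha, abs_of_nonneg hb]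
      _ ≤ a * ε + b * ε := by
          refine add_le_add ?_ ?_ <;>
            exact mul_le_mul_of_nonneg_left (by solve_by_elim) (by assumption)
      _ = ε := by rw [← add_mul, hab, one_mul]
  have hFcpt : IsCompact Fs := by
    have : Fs = Set.pi Set.univ (fun x => Set.Icc (f x - ε) (f x + ε)) := by
      ext h
      simp only [hFdef, Set.mem_setOf_eq, Set.mem_pi, Set.mem_univ, true_imp_iff,
        Set.mem_Icc]
      constructor
      · intro hh x; have := abs_le.mp (hh x); constructor <;> linarith [this.1, this.2]
      · intro hh x; rw [abs_le]; constructor <;> linarith [(hh x).1, (hh x).2]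
    rw [this]
    exact isCompact_univ_pi fun x => isCompact_Icc
  have hdisj : Disjoint K Fs := by
    rw [Set.disjoint_left]
    intro h hK hF
    have h1 : fourierL1 h ≤ D' := hK
    have h2 := hlb h hF
    linarith
  obtain ⟨ψ, u, v, hKlt, huv, hFgt⟩ :=
    geometric_hahn_banach_closed_compact hKconv hKclosed hFconv hFcpt hdisj
  -- u > 0
  have h0K : (0 : (Fin n → Bool) → ℝ) ∈ K := by
    show fourierL1 0 ≤ D'
    rw [fourierL1_zero]; exact le_of_lt hD0
  have hu0 : 0 < u := by have := hKlt 0 h0K; rwa [map_zero] at this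
  -- bound on ψ (chiS (Sx x))
  have hchiK : ∀ (x : Fin n → Bool) (c : ℝ), |c| = D' → (c • chiS (Sx x)) ∈ K := by
    intro x c hc
    show fourierL1 (c • chiS (Sx x)) ≤ D'
    have e : c • chiS (Sx x) = fun z => c * chiS (Sx x) z := by
      funext z; simp [Pi.smul_apply, smul_eq_mul]
    rw [e, fourierL1_mul_chiS, hc]
  have hgb : ∀ x : Fin n → Bool, D' * |ψ (chiS (Sx x))| < u := by
    intro x
    have h1 := hKlt _ (hchiK x D' (abs_of_pos hD0))
    have h2 := hKlt _ (hchiK x (-D') (by rw [abs_neg]; exact abs_of_pos hD0))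
    rw [map_smul, smul_eq_mul] at h1 h2
    rcases abs_cases (ψ (chiS (Sx x))) with ⟨he, _⟩ | ⟨he, _⟩
    · rw [he]; exact h1
    · rw [he]; nlinarith
  -- feasible point minimizing the linear functional on the cube
  set q : (Fin n → Bool) → ℝ := fun z => ψ (Pi.single z 1) with hqdef
  have hFside : v < (∑ z : Fin n → Bool, f z * q z) - ε * ∑ z : Fin n → Bool, |q z| := by
    have hmem : (fun z => f z - ε * Real.sign (q z)) ∈ Fs := by
      intro x
      have : |f x - ε * Real.sign (q x) - f x| = ε * |Real.sign (q x)| := by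
        rw [show f x - ε * Real.sign (q x) - f x = -(ε * Real.sign (q x)) by ring,
          abs_neg, abs_mul, abs_of_pos hε]
      rw [this]
      calc ε * |Real.sign (q x)| ≤ ε * 1 :=
            mul_le_mul_of_nonneg_left (abs_sign_le_one _) (le_of_lt hε)
        _ = ε := mul_one ε
    have := hFgt _ hmem
    rw [psi_eval ψ] at this
    calc v < ∑ z : Fin n → Bool, (f z - ε * Real.sign (q z)) * q z := this
      _ = (∑ z : Fin n → Bool, f z * q z) - ε * ∑ z : Fin n → Bool, |q z| := by
          rw [Finset.mul_sum, ← Finset.sum_sub_distrib]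
          refine Finset.sum_congr rfl fun z _ => ?_
          rw [← rsign_mul_self (q z)]
          ring
  -- the candidate dual solution
  set g : (Fin n → Bool) → ℝ := fun x => ψ (chiS (Sx x)) with hgdef
  have hq : ∀ w : Fin n → Bool, fCoeff g (Sx w) = q w := by
    intro w
    have e1 : fCoeff g (Sx w)
        = ψ ((1 / 2 ^ n : ℝ) • ∑ x : Fin n → Bool, chiS (Sx w) x • chiS (Sx x)) := by
      rw [map_smul, map_sum, smul_eq_mul, fCoeff_eq]
      congr 1
      refine Finset.sum_congr rfl fun x _ => ?_
      rw [map_smul, smul_eq_mul, hgdef]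
      ring
    have e2 : ((1 / 2 ^ n : ℝ) • ∑ x : Fin n → Bool, chiS (Sx w) x • chiS (Sx x))
        = Pi.single w 1 := by
      funext z
      rw [Pi.smul_apply, Finset.sum_apply, smul_eq_mul]
      have : ∀ x : Fin n → Bool, (chiS (Sx w) x • chiS (Sx x)) z
          = chiS (Sx w) x * chiS (Sx z) x := by
        intro x
        rw [Pi.smul_apply, smul_eq_mul, chiS_Sx_symm x z]
      rw [Finset.sum_congr rfl fun x _ => this x, sum_chiS_mul_chiS (Sx w) (Sx z)]
      by_cases hzw : z = w
      · subst hzw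
        rw [if_pos rfl, Pi.single_eq_same, one_div, inv_mul_cancel₀ (by positivity : ((2:ℝ)^n) ≠ 0)]
      · have : ¬ (Sx w = Sx z) := fun hc => hzw (Sx_injective hc).symm
        rw [if_neg this, Pi.single_eq_of_ne hzw, mul_zero]
    rw [e1, e2]
  refine ⟨fun x => (D' / u) * g x, ?_, ?_⟩
  · intro x
    have hb := hgb x
    rw [abs_mul, abs_of_pos (div_pos hD0 hu0)]
    rw [div_mul_eq_mul_div, div_le_one hu0]
    exact le_of_lt (by simpa [hgdef] using hb)
  · have hco : ∀ z, fCoeff (fun x => (D' / u) * g x) (Sx z) = (D' / u) * q z := by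
      intro z
      rw [fCoeff_smul, hq]
    simp_rw [hco]
    have hpos : 0 < D' / u := div_pos hD0 hu0
    have e3 : ∑ z : Fin n → Bool, |D' / u * q z| = (D' / u) * ∑ z : Fin n → Bool, |q z| := by
      rw [Finset.mul_sum]
      refine Finset.sum_congr rfl fun z _ => ?_
      rw [abs_mul, abs_of_pos hpos]
    have e4 : ∑ z : Fin n → Bool, f z * (D' / u * q z)
        = (D' / u) * ∑ z : Fin n → Bool, f z * q z := by
      rw [Finset.mul_sum]
      exact Finset.sum_congr rfl fun z _ => by ring
    rw [e3, e4]
    have : (D' / u) * ((∑ z : Fin n → Bool, f z * q z) - ε * ∑ z : Fin n → Bool, |q z|)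
        > (D' / u) * u := by
      refine mul_lt_mul_of_pos_left ?_ hpos
      linarith
    rw [div_mul_cancel₀ D' (ne_of_gt hu0)] at this
    linarith [this]

noncomputable def Phi {n : ℕ} (f : (Fin n → Bool) → ℝ) (ε : ℝ)
    (g : (Fin n → Bool) → ℝ) : ℝ :=
  (∑ z : Fin n → Bool, f z * fCoeff g (Sx z)) - ε * ∑ z : Fin n → Bool, |fCoeff g (Sx z)|

lemma continuous_Phi {n : ℕ} (f : (Fin n → Bool) → ℝ) (ε : ℝ) :
    Continuous (Phi f ε) := by
  unfold Phi
  refine Continuous.sub ?_ (continuous_const.mul ?_)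
  · exact continuous_finset_sum _ fun z _ => continuous_const.mul (continuous_fCoeff (Sx z))
  · exact continuous_finset_sum _ fun z _ => (continuous_fCoeff (Sx z)).abs

lemma Phi_zero {n : ℕ} (f : (Fin n → Bool) → ℝ) (ε : ℝ) : Phi f ε 0 = 0 := by
  simp [Phi, fCoeff_zero]

lemma cert_of_dual {n : ℕ} {f g : (Fin n → Bool) → ℝ} {ε : ℝ}
    (hf : ∀ z, f z = 1 ∨ f z = -1) (hε : 0 < ε) (hε1 : ε < 1)
    (hball : ∀ x, |g x| ≤ 1)
    (hPhi : (1 - ε) * fourierL1 f ≤ Phi f ε g) :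
    memStar f g ∧ memStar g f := by
  set A := ∑ z : Fin n → Bool, f z * fCoeff g (Sx z) with hAdef
  set B := ∑ z : Fin n → Bool, |fCoeff g (Sx z)| with hBdef
  set F := fourierL1 f with hFdef
  have habsf : ∀ z, |f z| = 1 := by
    intro z; rcases hf z with h | h <;> simp [h]
  have hA_eq : A = ∑ x : Fin n → Bool, g x * fCoeff f (Sx x) := (swap_sum g f).symm
  have hA_le_F : A ≤ F := by
    rw [hA_eq, hFdef]
    exact pairing_le_fourierL1 hball f
  have hA_le_B : A ≤ B := by
    refine Finset.sum_le_sum fun z _ => ?_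
    calc f z * fCoeff g (Sx z) ≤ |f z * fCoeff g (Sx z)| := le_abs_self _
      _ = |fCoeff g (Sx z)| := by rw [abs_mul, habsf z, one_mul]
  have hPhi' : (1 - ε) * F ≤ A - ε * B := hPhi
  have hA_ge_F : F ≤ A := by nlinarith
  have hA_F : A = F := le_antisymm hA_le_F hA_ge_F
  have hB_F : B = F := by
    have hB_le_F : B ≤ F := by nlinarith
    have hB_ge : F ≤ B := hA_F ▸ hA_le_B
    exact le_antisymm hB_le_F hB_ge
  -- termwise equalities
  have hterm1 : ∀ x : Fin n → Bool, g x * fCoeff f (Sx x) = |fCoeff f (Sx x)| := by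
    have hsum : ∑ x : Fin n → Bool, g x * fCoeff f (Sx x)
        = ∑ x : Fin n → Bool, |fCoeff f (Sx x)| := by
      rw [← hA_eq, hA_F, hFdef, fourierL1_eq_sum_points]
    have hle : ∀ x ∈ Finset.univ, g x * fCoeff f (Sx x) ≤ |fCoeff f (Sx x)| := by
      intro x _
      calc g x * fCoeff f (Sx x) ≤ |g x * fCoeff f (Sx x)| := le_abs_self _
        _ = |g x| * |fCoeff f (Sx x)| := abs_mul _ _
        _ ≤ 1 * |fCoeff f (Sx x)| := mul_le_mul_of_nonneg_right (hball x) (abs_nonneg _)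
        _ = _ := one_mul _
    intro x
    exact ((Finset.sum_eq_sum_iff_of_le hle).mp hsum x (Finset.mem_univ x))
  have hterm2 : ∀ z : Fin n → Bool, f z * fCoeff g (Sx z) = |fCoeff g (Sx z)| := by
    have hsum : A = B := by rw [hA_F, hB_F]
    have hle : ∀ z ∈ Finset.univ, f z * fCoeff g (Sx z) ≤ |fCoeff g (Sx z)| := by
      intro z _
      calc f z * fCoeff g (Sx z) ≤ |f z * fCoeff g (Sx z)| := le_abs_self _
        _ = |fCoeff g (Sx z)| := by rw [abs_mul, habsf z, one_mul]
    intro z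
    exact ((Finset.sum_eq_sum_iff_of_le hle).mp hsum z (Finset.mem_univ z))
  constructor
  · refine ⟨fun x => Set.mem_Icc.mpr (abs_le.mp (hball x)), fun x hx => ?_⟩
    exact eq_sign_of_mul_eq_abs hx (hterm1 x)
  · refine ⟨fun z => Set.mem_Icc.mpr (abs_le.mp (by rw [habsf z] : |f z| ≤ 1)), fun z hz => ?_⟩
    exact eq_sign_of_mul_eq_abs hz (hterm2 z)

lemma exists_cert {n : ℕ} {f : (Fin n → Bool) → ℝ} {ε : ℝ}
    (hf : ∀ z, f z = 1 ∨ f z = -1) (hε : 0 < ε) (hε1 : ε < 1)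
    (hlb : ∀ h : (Fin n → Bool) → ℝ, (∀ x, |h x - f x| ≤ ε) →
      (1 - ε) * fourierL1 f ≤ fourierL1 h) :
    ∃ g, memStar f g ∧ memStar g f := by
  classical
  set ball : Set ((Fin n → Bool) → ℝ) := {g | ∀ x, |g x| ≤ 1} with hballdef
  have hcpt : IsCompact ball := by
    have : ball = Set.pi Set.univ (fun _ : Fin n → Bool => Set.Icc (-1:ℝ) 1) := by
      ext g
      simp only [hballdef, Set.mem_setOf_eq, Set.mem_pi, Set.mem_univ, true_imp_iff,
        Set.mem_Icc]
      exact forall_congr' fun x => abs_le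
    rw [this]
    exact isCompact_univ_pi fun _ => isCompact_Icc
  have hne : ball.Nonempty := ⟨0, fun x => by simp⟩
  obtain ⟨g₀, hg₀mem, hg₀max⟩ :=
    hcpt.exists_isMaxOn hne (continuous_Phi f ε).continuousOn
  have hg₀max' : ∀ g ∈ ball, Phi f ε g ≤ Phi f ε g₀ := fun g hg => hg₀max hg
  have hPhi0 : 0 ≤ Phi f ε g₀ := by
    have := hg₀max' 0 (by intro x; simp)
    rwa [Phi_zero] at this
  have hval : (1 - ε) * fourierL1 f ≤ Phi f ε g₀ := by
    by_contra hcon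
    push_neg at hcon
    set D' := (Phi f ε g₀ + (1 - ε) * fourierL1 f) / 2 with hD'def
    have hD0 : 0 < D' := by rw [hD'def]; linarith
    have hDlt : D' < (1 - ε) * fourierL1 f := by rw [hD'def]; linarith
    obtain ⟨g, hgball, hglt⟩ := sep_lemma f ε D' hε hD0 hDlt hlb
    have : Phi f ε g ≤ Phi f ε g₀ := hg₀max' g hgball
    have hgt : D' < Phi f ε g := hglt
    rw [hD'def] at hgt
    linarith
  exact ⟨g₀, cert_of_dual hf hε hε1 hg₀mem hval⟩

lemma fourierL1_nonneg {n : ℕ} (F : (Fin n → Bool) → ℝ) : 0 ≤ fourierL1 F :=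
  Finset.sum_nonneg fun _ _ => abs_nonneg _

lemma fourierL1_smul {n : ℕ} (c : ℝ) (F : (Fin n → Bool) → ℝ) :
    fourierL1 (fun z => c * F z) = |c| * fourierL1 F := by
  unfold fourierL1
  rw [Finset.mul_sum]
  refine Finset.sum_congr rfl fun S _ => ?_
  rw [fCoeff_smul, abs_mul]

/-- `‖f^‖₁^ε = (1-ε)‖f^‖₁` iff `f ∈ f**`, i.e. iff there is `g ∈ f*` with
`f(x) = sign(g^(S_x))` whenever `g^(S_x) ≠ 0`. -/
theorem apx_l1_eq_iff {n : ℕ} (f : (Fin n → Bool) → ℝ)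
    (hf : ∀ z, f z = 1 ∨ f z = -1) (ε : ℝ) (hε : ε ∈ Set.Ioo (0:ℝ) 1) :
    apxFourierL1 f ε = (1 - ε) * fourierL1 f ↔
      ∃ g, memStar f g ∧ memStar g f := by
  obtain ⟨hε0, hε1⟩ := hε
  have habsf : ∀ z, |f z| = 1 := by
    intro z; rcases hf z with h | h <;> simp [h]
  have hbdd : BddBelow (fourierL1 '' {h : (Fin n → Bool) → ℝ | ∀ x, |h x - f x| ≤ ε}) := by
    refine ⟨0, ?_⟩
    rintro y ⟨h, _, rfl⟩
    exact fourierL1_nonneg h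
  have hfmem : f ∈ {h : (Fin n → Bool) → ℝ | ∀ x, |h x - f x| ≤ ε} := by
    intro x; simp [le_of_lt hε0]
  constructor
  · intro heq
    have hlb : ∀ h : (Fin n → Bool) → ℝ, (∀ x, |h x - f x| ≤ ε) →
        (1 - ε) * fourierL1 f ≤ fourierL1 h := by
      intro h hh
      have hmem : fourierL1 h ∈
          fourierL1 '' {h : (Fin n → Bool) → ℝ | ∀ x, |h x - f x| ≤ ε} := ⟨h, hh, rfl⟩
      have := csInf_le hbdd hmem
      rw [← heq]
      exact this
    exact exists_cert hf hε0 hε1 hlb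
  · rintro ⟨g, h1, h2⟩
    unfold apxFourierL1
    apply le_antisymm
    · have hfeas : (fun z => (1 - ε) * f z) ∈
          {h : (Fin n → Bool) → ℝ | ∀ x, |h x - f x| ≤ ε} := by
        intro x
        have : (1 - ε) * f x - f x = -(ε * f x) := by ring
        rw [this, abs_neg, abs_mul, habsf x, mul_one, abs_of_pos hε0]
      have hval : fourierL1 (fun z => (1 - ε) * f z) = (1 - ε) * fourierL1 f := by
        rw [fourierL1_smul, abs_of_pos (by linarith : (0:ℝ) < 1 - ε)]
      exact csInf_le hbdd ⟨_, hfeas, hval⟩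
    · refine le_csInf ⟨fourierL1 f, ⟨f, hfmem, rfl⟩⟩ ?_
      rintro y ⟨h, hh, rfl⟩
      exact lb_of_cert h1 h2 hh
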